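/- Let G be an extraspecial group of exponent p and order p³ for an odd prime p, let a ∈ G \ Z(G), and let H = C_G(a). Then η(a^H (a⁻¹)^H) = 1 while η(a^G (a⁻¹)^G) = p. Hence for a subgroup H with C_G(a) ⊆ H ⊆ G, it need not hold that η(a^G (a⁻¹)^G) ≤ η(a^H (a⁻¹)^H). -/

import Mathlib

open Pointwise

/-- The conjugacy class of `a` in `G`. -/
def conjClass {G : Type*} [Group G] (a : G) : Set G := {x | ∃ g : G, g⁻¹ * a * g = x}

/-- The conjugation orbit of `a` under a subgroup `H`: `a^H`. -/
def subConjClass {G : Type*} [Group G] (H : Subgroup G) (a : G) : Set G :=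
  (fun h => h⁻¹ * a * h) '' (H : Set G)

/-- The number of distinct `H`-conjugacy classes meeting a set `X ⊆ G`. -/
noncomputable def etaIn {G : Type*} [Group G] (H : Subgroup G) (X : Set G) : ℕ :=
  ((fun x => subConjClass H x) '' X).ncard

lemma subConjClass_of_center {G : Type*} [Group G] (H : Subgroup G) (z : G)
    (hz : z ∈ Subgroup.center G) : subConjClass H z = {z} := by
  ext x
  simp only [subConjClass, Set.mem_image, Set.mem_singleton_iff]
  constructor
  · rintro ⟨h, -, rfl⟩
    have h1 := Subgroup.mem_center_iff.mp hz h
    rw [mul_assoc, ← h1]; group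
  · rintro rfl
    exact ⟨1, H.one_mem, by group⟩

open scoped commutatorElement in
lemma key {G : Type*} [Group G] [Fintype G] (p : ℕ) (hp : p.Prime)
    (hZcomm : (Subgroup.center G : Subgroup G) = commutator G)
    (hZcard : Nat.card (Subgroup.center G) = p)
    (b : G) (hb : b ∉ Subgroup.center G) :
    ∀ z ∈ Subgroup.center G, ∃ g : G, g⁻¹ * b * g = b * z := by
  have hmem : ∀ g : G, b⁻¹ * (g⁻¹ * b * g) ∈ Subgroup.center G := by
    intro g
    have : b⁻¹ * (g⁻¹ * b * g) = ⁅b⁻¹, g⁻¹⁆ := by group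
    rw [this, hZcomm]
    exact Subgroup.commutator_mem_commutator (Subgroup.mem_top _) (Subgroup.mem_top _)
  set φ : G →* Subgroup.center G :=
    { toFun := fun g => ⟨b⁻¹ * (g⁻¹ * b * g), hmem g⟩
      map_one' := Subtype.ext (by simp)
      map_mul' := by
        intro g h
        apply Subtype.ext
        show b⁻¹ * ((g * h)⁻¹ * b * (g * h)) =
          (b⁻¹ * (g⁻¹ * b * g)) * (b⁻¹ * (h⁻¹ * b * h))
        have hcg := hmem g
        have h1 : (b⁻¹ * (g⁻¹ * b * g)) * h = h * (b⁻¹ * (g⁻¹ * b * g)) :=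
          (Subgroup.mem_center_iff.mp hcg h).symm
        have h2 : (b⁻¹ * (g⁻¹ * b * g)) * (b⁻¹ * (h⁻¹ * b * h)) =
            (b⁻¹ * (h⁻¹ * b * h)) * (b⁻¹ * (g⁻¹ * b * g)) :=
          (Subgroup.mem_center_iff.mp hcg _).symm
        rw [h2]
        calc b⁻¹ * ((g * h)⁻¹ * b * (g * h))
            = b⁻¹ * (h⁻¹ * (b * (b⁻¹ * (g⁻¹ * b * g))) * h) := by group
          _ = b⁻¹ * (h⁻¹ * b * ((b⁻¹ * (g⁻¹ * b * g)) * h)) := by group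
          _ = b⁻¹ * (h⁻¹ * b * (h * (b⁻¹ * (g⁻¹ * b * g)))) := by rw [h1]
          _ = (b⁻¹ * (h⁻¹ * b * h)) * (b⁻¹ * (g⁻¹ * b * g)) := by group }
  have hne : φ.range ≠ ⊥ := by
    intro hbot
    apply hb
    rw [Subgroup.mem_center_iff]
    intro g
    have hg1 : φ g = 1 := by
      have : φ g ∈ φ.range := ⟨g, rfl⟩
      rw [hbot] at this
      simpa using this
    have hc1 : b⁻¹ * (g⁻¹ * b * g) = 1 := congrArg Subtype.val hg1
    have hc2 : g⁻¹ * b * g = b := by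
      have := congrArg (fun x => b * x) hc1
      simpa [mul_assoc] using this
    calc g * b = g * (g⁻¹ * b * g) := by rw [hc2]
      _ = b * g := by group
  have hrange : φ.range = ⊤ := by
    have hdvd : Nat.card φ.range ∣ p := by
      rw [← hZcard]
      exact Subgroup.card_subgroup_dvd_card φ.range
    have hpos : Nat.card φ.range ≠ 1 := by
      intro h1
      exact hne (Subgroup.eq_bot_of_card_eq _ h1)
    have : Nat.card φ.range = p := (Nat.Prime.eq_one_or_self_of_dvd hp _ hdvd).resolve_left hpos
    exact Subgroup.eq_top_of_card_eq _ (by rw [this, hZcard])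
  intro z hz
  obtain ⟨g, hg⟩ := hrange ▸ Subgroup.mem_top (⟨z, hz⟩ : Subgroup.center G)
  refine ⟨g, ?_⟩
  have h3 : b⁻¹ * (g⁻¹ * b * g) = z := congrArg Subtype.val hg
  have := congrArg (fun x => b * x) h3
  simpa [mul_assoc] using this

open scoped commutatorElement in
lemma classEq {G : Type*} [Group G] [Fintype G] (p : ℕ) (hp : p.Prime)
    (hZcomm : (Subgroup.center G : Subgroup G) = commutator G)
    (hZcard : Nat.card (Subgroup.center G) = p)
    (b : G) (hb : b ∉ Subgroup.center G) :
    subConjClass ⊤ b = b • (Subgroup.center G : Set G) := by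
  ext x
  simp only [subConjClass, Set.mem_image, Subgroup.coe_top, Set.mem_univ, true_and,
    Set.mem_smul_set, SetLike.mem_coe, smul_eq_mul]
  constructor
  · rintro ⟨g, rfl⟩
    refine ⟨b⁻¹ * (g⁻¹ * b * g), ?_, by group⟩
    have : b⁻¹ * (g⁻¹ * b * g) = ⁅b⁻¹, g⁻¹⁆ := by group
    rw [this, hZcomm]
    exact Subgroup.commutator_mem_commutator (Subgroup.mem_top _) (Subgroup.mem_top _)
  · rintro ⟨z, hz, rfl⟩
    obtain ⟨g, hg⟩ := key p hp hZcomm hZcard b hb z hz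
    exact ⟨g, hg⟩

/-- for `G` extraspecial of exponent `p` and order `p³` (`p` an odd prime),
`a ∈ G \ Z(G)` and `H = C_G(a)`, one has `η(a^H (a⁻¹)^H) = 1` (counting `H`-classes)
while `η(a^G (a⁻¹)^G) = p` (counting `G`-classes); in particular for a subgroup `H` with
`C_G(a) ⊆ H ⊆ G` we need not have `η(a^G (a⁻¹)^G) ≤ η(a^H (a⁻¹)^H)`. -/
theorem stmt12 {G : Type*} [Group G] [Fintype G] (p : ℕ) (hp : p.Prime) (hodd : Odd p)
    (hcard : Fintype.card G = p ^ 3) (hexp : ∀ g : G, g ^ p = 1)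
    (hZcomm : (Subgroup.center G : Subgroup G) = commutator G)
    (hZfrat : (Subgroup.center G : Subgroup G) = frattini G)
    (hZcard : Nat.card (Subgroup.center G) = p)
    (a : G) (ha : a ∉ Subgroup.center G) :
    etaIn (Subgroup.centralizer {a})
        (subConjClass (Subgroup.centralizer {a}) a *
          subConjClass (Subgroup.centralizer {a}) a⁻¹) = 1 ∧
      etaIn (⊤ : Subgroup G) (subConjClass ⊤ a * subConjClass ⊤ a⁻¹) = p := by
  constructor
  · have hCa : subConjClass (Subgroup.centralizer {a}) a = {a} := by
      ext x
      simp only [subConjClass, Set.mem_image, Set.mem_singleton_iff]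
      constructor
      · rintro ⟨h, hh, rfl⟩
        have hcomm : Commute a h := Subgroup.mem_centralizer_iff.mp hh a rfl
        rw [mul_assoc, hcomm.eq]; group
      · rintro rfl
        exact ⟨1, Subgroup.one_mem _, by group⟩
    have hCai : subConjClass (Subgroup.centralizer {a}) a⁻¹ = {a⁻¹} := by
      ext x
      simp only [subConjClass, Set.mem_image, Set.mem_singleton_iff]
      constructor
      · rintro ⟨h, hh, rfl⟩
        have hcomm : Commute a h := Subgroup.mem_centralizer_iff.mp hh a rfl
        rw [mul_assoc, hcomm.inv_left.eq]; group
      · rintro rfl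
        exact ⟨1, Subgroup.one_mem _, by group⟩
    rw [hCa, hCai, Set.singleton_mul_singleton, mul_inv_cancel]
    show (((fun x => subConjClass _ x) '' {1})).ncard = 1
    rw [Set.image_singleton, Set.ncard_singleton]
  · have hai : a⁻¹ ∉ Subgroup.center G := fun h => ha (by simpa using (Subgroup.center G).inv_mem h)
    have h1 := classEq p hp hZcomm hZcard a ha
    have h2 := classEq p hp hZcomm hZcard a⁻¹ hai
    have hprod : subConjClass ⊤ a * subConjClass ⊤ a⁻¹ = (Subgroup.center G : Set G) := by
      rw [h1, h2]
      ext x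
      simp only [Set.mem_mul, Set.mem_smul_set, SetLike.mem_coe, smul_eq_mul]
      constructor
      · rintro ⟨u, ⟨z1, hz1, rfl⟩, v, ⟨z2, hz2, rfl⟩, rfl⟩
        have heq : a * z1 * (a⁻¹ * z2) = z1 * z2 := by
          have hc : z1 * a⁻¹ = a⁻¹ * z1 := (Subgroup.mem_center_iff.mp hz1 a⁻¹).symm
          calc a * z1 * (a⁻¹ * z2) = a * (z1 * a⁻¹) * z2 := by group
            _ = a * (a⁻¹ * z1) * z2 := by rw [hc]
            _ = z1 * z2 := by group
        rw [heq]
        exact Subgroup.mul_mem _ hz1 hz2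
      · intro hx
        exact ⟨a, ⟨1, Subgroup.one_mem _, mul_one a⟩, a⁻¹ * x,
          ⟨x, hx, rfl⟩, by group⟩
    rw [hprod]
    show (((fun x => subConjClass (⊤ : Subgroup G) x) '' (Subgroup.center G : Set G))).ncard = p
    have himg : ((fun x => subConjClass (⊤ : Subgroup G) x) '' (Subgroup.center G : Set G)) =
        (fun x => ({x} : Set G)) '' (Subgroup.center G : Set G) := by
      apply Set.image_congr
      intro x hx
      exact subConjClass_of_center ⊤ x hx
    rw [himg, Set.ncard_image_of_injective _ Set.singleton_injective,
      ← Nat.card_coe_set_eq]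
    simpa using hZcard
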